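/- arXiv:1308.1491 — 2 statements merged into one kernel-verified Lean document; each statement's English description precedes it below -/
import Mathlib

section
/- For every real z and all real t, s with |t-s| > 0 and every α > 0, one has |e^{itz} - e^{isz}| = 2|sin(z(t-s)/2)| ≤ 2 (ln(e^α + |z|/2) / ln(e^α + 1/|t-s|))^α. -/
open Real Complex

private theorem key_abs_exp (θ φ : ℝ) :
    ‖Complex.exp (θ*Complex.I) - Complex.exp (φ*Complex.I)‖ = 2*|Real.sin ((θ-φ)/2)| := by
  rw [Complex.exp_mul_I, Complex.exp_mul_I, ← Complex.ofReal_cos, ← Complex.ofReal_sin,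
    ← Complex.ofReal_cos, ← Complex.ofReal_sin]
  have h1 : (Real.cos θ : ℂ) + Real.sin θ * Complex.I - ((Real.cos φ : ℂ) + Real.sin φ * Complex.I)
      = Complex.mk (Real.cos θ - Real.cos φ) (Real.sin θ - Real.sin φ) := by
    apply Complex.ext <;> simp [Complex.cos_ofReal_re, Complex.sin_ofReal_re]
  rw [h1, Complex.norm_def, Complex.normSq_mk]
  have hs : Real.sin ((θ-φ)/2)^2 = 1/2 - Real.cos (θ-φ)/2 := by
    have h3 := Real.cos_sq ((θ-φ)/2)
    have h2 : 2*((θ-φ)/2) = θ-φ := by ring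
    rw [h2] at h3
    nlinarith [Real.sin_sq_add_cos_sq ((θ-φ)/2)]
  have h2 : (Real.cos θ - Real.cos φ) * (Real.cos θ - Real.cos φ)
        + (Real.sin θ - Real.sin φ) * (Real.sin θ - Real.sin φ)
      = (2*|Real.sin ((θ-φ)/2)|)^2 := by
    have hc : Real.cos (θ - φ) = Real.cos θ * Real.cos φ + Real.sin θ * Real.sin φ := Real.cos_sub θ φ
    have p1 := Real.sin_sq_add_cos_sq θ
    have p2 := Real.sin_sq_add_cos_sq φ
    have h4 := _root_.sq_abs (Real.sin ((θ-φ)/2))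
    nlinarith
  rw [h2, Real.sqrt_sq (by positivity)]

private theorem key_ratio (α a b : ℝ) (hα : 0 < α) (ha : 0 < a) (hb : 0 < b) (hab : a ≤ b) :
    a / b ≤ (Real.log (Real.exp α + a) / Real.log (Real.exp α + b)) ^ α := by
  set ga := Real.log (Real.exp α + a) with hga
  set gb := Real.log (Real.exp α + b) with hgb
  have hea : (0:ℝ) < Real.exp α := Real.exp_pos α
  have hαga : α ≤ ga := by
    calc α = Real.log (Real.exp α) := (Real.log_exp α).symm
    _ ≤ ga := Real.log_le_log (by positivity) (by linarith)
  have hgagb : ga ≤ gb := Real.log_le_log (by positivity) (by linarith)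
  have hga0 : 0 < ga := lt_of_lt_of_le hα hαga
  have hgb0 : 0 < gb := lt_of_lt_of_le hga0 hgagb
  have h1 : gb - ga ≤ Real.log (b/a) := by
    rw [hga, hgb, ← Real.log_div (by positivity) (by positivity)]
    apply Real.log_le_log (by positivity)
    rw [div_le_div_iff₀ (by positivity) ha]
    nlinarith
  have h2 : α * Real.log (gb/ga) ≤ gb - ga := by
    have := Real.log_le_sub_one_of_pos (show 0 < gb/ga by positivity)
    have h3 : gb/ga - 1 = (gb - ga)/ga := by field_simp
    have h4 : α * Real.log (gb/ga) ≤ α * ((gb-ga)/ga) := by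
      apply mul_le_mul_of_nonneg_left _ hα.le
      linarith
    have h5 : α * ((gb-ga)/ga) ≤ gb - ga := by
      rw [mul_div_assoc'] at h4 ⊢
      rw [div_le_iff₀ hga0]
      nlinarith
    linarith
  have h6 : (gb/ga) ^ α ≤ b/a := by
    rw [Real.rpow_def_of_pos (by positivity)]
    calc Real.exp (Real.log (gb/ga) * α) ≤ Real.exp (Real.log (b/a)) := by
          apply Real.exp_le_exp.2; rw [mul_comm]; linarith
    _ = b/a := Real.exp_log (by positivity)
  have h7 : ga/gb = (gb/ga)⁻¹ := by field_simp
  rw [h7, Real.inv_rpow (by positivity), show a/b = (b/a)⁻¹ by rw [inv_div]]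
  exact inv_anti₀ (Real.rpow_pos_of_pos (by positivity) α) h6

theorem stmt0 (z t s : ℝ) (hts : |t - s| > 0) (α : ℝ) (hα : α > 0) :
    ‖Complex.exp (Complex.I * t * z) - Complex.exp (Complex.I * s * z)‖
      = 2 * |Real.sin (z * (t - s) / 2)| ∧
    2 * |Real.sin (z * (t - s) / 2)|
      ≤ 2 * (Real.log (Real.exp α + |z| / 2) / Real.log (Real.exp α + 1 / |t - s|)) ^ α := by
  constructor
  · have e1 : Complex.I * (t:ℂ) * (z:ℂ) = ((t*z : ℝ) : ℂ) * Complex.I := by push_cast; ring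
    have e2 : Complex.I * (s:ℂ) * (z:ℂ) = ((s*z : ℝ) : ℂ) * Complex.I := by push_cast; ring
    rw [e1, e2, key_abs_exp, show (t*z - s*z)/2 = z*(t-s)/2 by ring]
  · set a := |z| / 2 with ha
    set b := 1 / |t - s| with hbdef
    have hb : 0 < b := by positivity
    have ha0 : 0 ≤ a := by positivity
    have hsin : |Real.sin (z * (t - s) / 2)| ≤ min 1 (a/b) := by
      apply le_min (Real.abs_sin_le_one _)
      calc |Real.sin (z * (t - s) / 2)| ≤ |z * (t - s) / 2| := Real.abs_sin_le_abs
      _ = a / b := by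
          rw [ha, hbdef, abs_div, abs_mul]
          rw [show |(2:ℝ)| = 2 by norm_num]
          have h2 : |t - s| ≠ 0 := ne_of_gt hts
          field_simp
    have hmain : min 1 (a/b) ≤ (Real.log (Real.exp α + a) / Real.log (Real.exp α + b)) ^ α := by
      rcases le_or_gt b a with h | h
      · apply le_trans (min_le_left _ _)
        apply Real.one_le_rpow _ hα.le
        rw [le_div_iff₀ (by
          have : (0:ℝ) < Real.exp α + b := by positivity
          calc (0:ℝ) < α := hα
          _ = Real.log (Real.exp α) := (Real.log_exp α).symm
          _ ≤ Real.log (Real.exp α + b) := Real.log_le_log (Real.exp_pos α) (by linarith))]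
        rw [one_mul]
        exact Real.log_le_log (by positivity) (by linarith)
      · apply le_trans (min_le_right _ _)
        rcases eq_or_lt_of_le ha0 with h0 | h0
        · rw [← h0, zero_div]
          have he : (1:ℝ) ≤ Real.exp α := Real.one_le_exp hα.le
          exact Real.rpow_nonneg (div_nonneg (Real.log_nonneg (by linarith))
            (Real.log_nonneg (by linarith))) α
        · exact key_ratio α a b hα h0 hb h.le
    have : |Real.sin (z * (t - s) / 2)| ≤ (Real.log (Real.exp α + a) / Real.log (Real.exp α + b)) ^ α :=
      le_trans hsin hmain
    linarith
end

section
/- Let α > 1/2, c > 0, T > 0, ε₀ > 0, and let σ(ε) = c/(ln(e^α + 1/ε))^α. Set γ = min(ε₀, σ(T/2)). Then (1/√2) ∫_0^γ (ln(T/(2σ^{(-1)}(ε)) + 1))^{1/2} dε ≤ (γ/√2)(√(ln(T+1)) + (1 - 1/(2α))^{-1} (c/γ)^{1/(2α)}), where σ^{(-1)}(t) = 1/(e^{(c/t)^{1/α}} - e^α). -/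
open Real MeasureTheory

lemma sqrt_add_le' {a b : ℝ} (ha : 0 ≤ a) (hb : 0 ≤ b) :
    Real.sqrt (a + b) ≤ Real.sqrt a + Real.sqrt b := by
  have h1 := Real.sq_sqrt ha
  have h2 := Real.sq_sqrt hb
  have h3 := Real.sqrt_nonneg a
  have h4 := Real.sqrt_nonneg b
  have h : a + b ≤ (Real.sqrt a + Real.sqrt b) ^ 2 := by nlinarith
  calc Real.sqrt (a + b) ≤ Real.sqrt ((Real.sqrt a + Real.sqrt b) ^ 2) :=
        Real.sqrt_le_sqrt h
    _ = Real.sqrt a + Real.sqrt b := Real.sqrt_sq (by positivity)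

theorem stmt19 (α c T ε₀ : ℝ) (hα : 1 / 2 < α) (hc : 0 < c) (hT : 0 < T) (hε₀ : 0 < ε₀)
    (γ : ℝ) (hγ : γ = min ε₀ (c / (Real.log (Real.exp α + 1 / (T / 2))) ^ α)) :
    (1 / Real.sqrt 2) *
        ∫ ε in (0:ℝ)..γ,
          Real.sqrt (Real.log (T / (2 * (1 / (Real.exp ((c / ε) ^ (1 / α)) - Real.exp α))) + 1))
      ≤ (γ / Real.sqrt 2) *
          (Real.sqrt (Real.log (T + 1)) + (1 - 1 / (2 * α))⁻¹ * (c / γ) ^ (1 / (2 * α))) := by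
  have hα0 : (0:ℝ) < α := lt_trans (by norm_num) hα
  set p : ℝ := 1 / (2 * α) with hp
  have hp0 : 0 < p := by positivity
  have hp1 : p < 1 := by
    rw [hp, div_lt_one (by linarith)]; linarith
  set L : ℝ := Real.log (Real.exp α + 1 / (T / 2)) with hL
  have hexp1 : (1:ℝ) < Real.exp α := by
    calc (1:ℝ) = Real.exp 0 := Real.exp_zero.symm
      _ < Real.exp α := Real.exp_lt_exp.mpr hα0
  have hargL : (1:ℝ) < Real.exp α + 1 / (T / 2) := by
    have h2 : (0:ℝ) < 1 / (T / 2) := by positivity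
    linarith
  have hL0 : 0 < L := Real.log_pos hargL
  have hσ : 0 < c / L ^ α := by positivity
  have hγ0 : 0 < γ := by rw [hγ]; exact lt_min hε₀ hσ
  have hγσ : γ ≤ c / L ^ α := by rw [hγ]; exact min_le_right _ _
  have hlogT1 : 0 ≤ Real.log (T + 1) := Real.log_nonneg (by linarith)
  set f : ℝ → ℝ := fun ε =>
    Real.sqrt (Real.log (T / (2 * (1 / (Real.exp ((c / ε) ^ (1 / α)) - Real.exp α))) + 1)) with hf
  set g : ℝ → ℝ := fun ε => Real.sqrt (Real.log (T + 1)) + c ^ p * ε ^ (-p) with hg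
  -- pointwise bound on Ioc 0 γ
  have key : ∀ ε ∈ Set.Ioc (0:ℝ) γ, f ε ≤ g ε := by
    rintro ε ⟨hε0, hεγ⟩
    set x : ℝ := (c / ε) ^ (1 / α) with hx
    have hcε : 0 < c / ε := by positivity
    have hx0 : 0 ≤ x := Real.rpow_nonneg hcε.le _
    have hLx : L ≤ x := by
      have h1 : L ^ α ≤ c / ε := by
        rw [le_div_iff₀ hε0]
        have h2 := hεγ.trans hγσ
        rw [le_div_iff₀ (by positivity)] at h2
        linarith
      have h3 : (L ^ α) ^ (1 / α) = L := by
        rw [← Real.rpow_mul hL0.le, mul_one_div, div_self hα0.ne', Real.rpow_one]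
      calc L = (L ^ α) ^ (1 / α) := h3.symm
        _ ≤ x := Real.rpow_le_rpow (by positivity) h1 (by positivity)
    set D : ℝ := Real.exp x - Real.exp α with hD
    have hDge : 1 / (T / 2) ≤ D := by
      have h4 : Real.exp L ≤ Real.exp x := Real.exp_le_exp.mpr hLx
      rw [hL, Real.exp_log (by linarith)] at h4
      simp only [hD]; linarith
    have hDpos : 0 < D := lt_of_lt_of_le (by positivity) hDge
    have hsimp : T / (2 * (1 / D)) = T * D / 2 := by
      rw [mul_one_div, div_div_eq_mul_div]
    have hA1 : 1 ≤ T * D / 2 := by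
      rw [le_div_iff₀ (by norm_num)]
      have h2a : T * (1 / (T / 2)) ≤ T * D :=
        mul_le_mul_of_nonneg_left hDge hT.le
      have hTD : T * (1 / (T / 2)) = 2 := by field_simp
      have h2b : 2 ≤ T * D := by rw [← hTD]; exact h2a
      linarith
    have hlog : Real.log (T * D / 2 + 1) ≤ Real.log (T + 1) + x := by
      have h5 : Real.log (T * D / 2 + 1) ≤ Real.log (T * D) := by
        apply Real.log_le_log (by linarith)
        linarith
      have h6 : Real.log (T * D) = Real.log T + Real.log D :=
        Real.log_mul hT.ne' hDpos.ne'
      have h7 : Real.log D ≤ x := by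
        calc Real.log D ≤ Real.log (Real.exp x) := by
              apply Real.log_le_log hDpos
              have := Real.exp_pos α; simp only [hD]; linarith
          _ = x := Real.log_exp x
      have h8 : Real.log T ≤ Real.log (T + 1) := Real.log_le_log hT (by linarith)
      linarith
    have hsq : Real.sqrt x = (c / ε) ^ p := by
      rw [hx, Real.sqrt_eq_rpow, ← Real.rpow_mul hcε.le]
      congr 1
      rw [hp]; field_simp
    calc f ε = Real.sqrt (Real.log (T * D / 2 + 1)) := by
          show Real.sqrt (Real.log (T / (2 * (1 / D)) + 1)) = _
          rw [hsimp]
      _ ≤ Real.sqrt (Real.log (T + 1) + x) := Real.sqrt_le_sqrt hlog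
      _ ≤ Real.sqrt (Real.log (T + 1)) + Real.sqrt x := sqrt_add_le' hlogT1 hx0
      _ = Real.sqrt (Real.log (T + 1)) + c ^ p * ε ^ (-p) := by
          rw [hsq, Real.div_rpow hc.le hε0.le, Real.rpow_neg hε0.le, div_eq_mul_inv]
      _ = g ε := rfl
  -- integrability of g
  have hgint : IntervalIntegrable g volume 0 γ := by
    apply IntervalIntegrable.add
    · exact intervalIntegrable_const
    · exact (intervalIntegral.intervalIntegrable_rpow' (by linarith)).const_mul _
  -- f is nonnegative and measurable
  have hfmeas : Measurable f := by
    apply Measurable.sqrt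
    apply Real.measurable_log.comp
    fun_prop
  have hgnonneg : ∀ ε ∈ Set.Ioc (0:ℝ) γ, 0 ≤ g ε := by
    rintro ε ⟨hε0, _⟩
    have : (0:ℝ) ≤ c ^ p * ε ^ (-p) := by positivity
    have := Real.sqrt_nonneg (Real.log (T + 1))
    simp only [hg]; linarith
  have hfint : IntervalIntegrable f volume 0 γ := by
    apply IntervalIntegrable.mono_fun hgint hfmeas.aestronglyMeasurable
    rw [Filter.EventuallyLE, ae_restrict_iff' measurableSet_uIoc]
    filter_upwards with ε hε
    rw [Set.uIoc_of_le hγ0.le] at hε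
    rw [Real.norm_eq_abs, Real.norm_eq_abs, abs_of_nonneg (Real.sqrt_nonneg _),
      abs_of_nonneg (hgnonneg ε hε)]
    exact key ε hε
  -- integral comparison
  have hint_le : (∫ ε in (0:ℝ)..γ, f ε) ≤ ∫ ε in (0:ℝ)..γ, g ε := by
    rw [intervalIntegral.integral_of_le hγ0.le, intervalIntegral.integral_of_le hγ0.le]
    apply setIntegral_mono_on
    · exact (intervalIntegrable_iff_integrableOn_Ioc_of_le hγ0.le).mp hfint
    · exact (intervalIntegrable_iff_integrableOn_Ioc_of_le hγ0.le).mp hgint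
    · exact measurableSet_Ioc
    · exact key
  -- compute ∫ g
  have hgval : (∫ ε in (0:ℝ)..γ, g ε)
      = γ * Real.sqrt (Real.log (T + 1)) + c ^ p * (γ ^ (1 - p) / (1 - p)) := by
    rw [hg, intervalIntegral.integral_add intervalIntegrable_const
      ((intervalIntegral.intervalIntegrable_rpow' (by linarith)).const_mul _),
      intervalIntegral.integral_const, intervalIntegral.integral_const_mul,
      integral_rpow (Or.inl (by linarith))]
    have h0 : (0:ℝ) ^ (-p + 1) = 0 := by
      rw [Real.zero_rpow (by linarith)]
    rw [h0]
    have he : -p + 1 = 1 - p := by ring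
    rw [he, smul_eq_mul]
    ring
  -- final algebra
  have hRHS : γ * (Real.sqrt (Real.log (T + 1)) + (1 - p)⁻¹ * (c / γ) ^ p)
      = γ * Real.sqrt (Real.log (T + 1)) + c ^ p * (γ ^ (1 - p) / (1 - p)) := by
    have h1 : (c / γ) ^ p = c ^ p / γ ^ p := Real.div_rpow hc.le hγ0.le p
    have h2 : γ ^ (1 - p) = γ / γ ^ p := by
      rw [Real.rpow_sub hγ0, Real.rpow_one]
    rw [h1, h2]
    have hγp : (0:ℝ) < γ ^ p := Real.rpow_pos_of_pos hγ0 p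
    field_simp
  have hs2 : (0:ℝ) < Real.sqrt 2 := Real.sqrt_pos.mpr (by norm_num)
  calc (1 / Real.sqrt 2) * ∫ ε in (0:ℝ)..γ, f ε
      ≤ (1 / Real.sqrt 2) * ∫ ε in (0:ℝ)..γ, g ε := by
        apply mul_le_mul_of_nonneg_left hint_le (by positivity)
    _ = (γ / Real.sqrt 2) *
          (Real.sqrt (Real.log (T + 1)) + (1 - p)⁻¹ * (c / γ) ^ p) := by
        rw [hgval, ← hRHS]; field_simp
end
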